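/- Let f : X → ℂ be measurable with ∫_X ω^{−2}|f|² dμ < ∞. Then for every z ∈ ℂ \ [m, ∞) the function k ↦ |f(k)|²·(1/(ω(k) − z) − 1/(ω(k) + 1)) is μ-integrable, and the function F(z) := ∫_X |f(k)|²·(1/(ω(k) − z) − 1/(ω(k) + 1)) dμ(k) is holomorphic (complex differentiable) on the open set ℂ \ [m, ∞). -/

import Mathlib

open MeasureTheory ENNReal Metric

private lemma distBound (m : ℝ) (hm : 0 < m) {z₀ : ℂ}
    (hz : z₀.im ≠ 0 ∨ z₀.re < m) :
    ∃ ε > 0, ∃ c > 0, ∀ z ∈ Metric.ball z₀ ε, ∀ x : ℝ, m ≤ x →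
      c * x ≤ ‖(x : ℂ) - z‖ := by
  set K : Set ℂ := {w : ℂ | w.im = 0 ∧ m ≤ w.re} with hK
  have hKclosed : IsClosed K := by
    have h1 : IsClosed {w : ℂ | w.im = 0} := isClosed_eq Complex.continuous_im continuous_const
    have h2 : IsClosed {w : ℂ | m ≤ w.re} := isClosed_le continuous_const Complex.continuous_re
    exact h1.inter h2
  have hKne : K.Nonempty := ⟨(m : ℂ), by simp [hK]⟩
  have hz₀ : z₀ ∉ K := by
    rcases hz with h | h
    · exact fun hc => h hc.1
    · exact fun hc => absurd hc.2 (not_le.2 h)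
  have hd : 0 < infDist z₀ K := (hKclosed.notMem_iff_infDist_pos hKne).1 hz₀
  set d := infDist z₀ K with hdd
  set ε := d / 2 with hε
  set R := ‖z₀‖ + ε with hR
  have hεpos : 0 < ε := by positivity
  have hRpos : 0 < R := by positivity
  refine ⟨ε, hεpos, min (d / (4 * R)) (1 / 2), by positivity, ?_⟩
  intro z hzball x hx
  have hxK : (x : ℂ) ∈ K := ⟨by simp, by simpa using hx⟩
  have hdx : d ≤ dist z₀ (x : ℂ) := infDist_le_dist_of_mem hxK
  have hzz₀ : dist z z₀ < ε := mem_ball.1 hzball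
  have h1 : d / 2 ≤ ‖(x : ℂ) - z‖ := by
    have := dist_triangle z₀ z (x : ℂ)
    have hne : dist z (x : ℂ) = ‖(x : ℂ) - z‖ := by
      rw [dist_eq_norm, norm_sub_rev]
    rw [dist_comm z₀ z] at this
    linarith [hzz₀, hdx, hne ▸ this, hne]
  have hznorm : ‖z‖ < R := by
    calc ‖z‖ ≤ ‖z₀‖ + ‖z - z₀‖ := by
          have := norm_add_le z₀ (z - z₀); simpa using this
      _ < ‖z₀‖ + ε := by
          have : ‖z - z₀‖ < ε := by rwa [← dist_eq_norm]
          linarith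
  have hxpos : 0 < x := lt_of_lt_of_le hm hx
  have h2 : x - ‖z‖ ≤ ‖(x : ℂ) - z‖ := by
    have := norm_sub_norm_le ((x : ℂ)) z
    have hxn : ‖(x : ℂ)‖ = x := by
      rw [Complex.norm_real, Real.norm_of_nonneg hxpos.le]
    linarith [this, hxn ▸ this]
  rcases le_or_gt x (2 * R) with hcase | hcase
  · calc min (d / (4 * R)) (1 / 2) * x ≤ d / (4 * R) * x := by
          apply mul_le_mul_of_nonneg_right (min_le_left _ _) hxpos.le
      _ ≤ d / (4 * R) * (2 * R) := by
          apply mul_le_mul_of_nonneg_left hcase (by positivity)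
      _ = d / 2 := by field_simp; ring
      _ ≤ ‖(x : ℂ) - z‖ := h1
  · calc min (d / (4 * R)) (1 / 2) * x ≤ 1 / 2 * x := by
          apply mul_le_mul_of_nonneg_right (min_le_right _ _) hxpos.le
      _ ≤ x - ‖z‖ := by nlinarith [norm_nonneg z]
      _ ≤ ‖(x : ℂ) - z‖ := h2

private lemma sub_ne_zero_of_bound {a : ℝ} (ha : 0 < a) {z : ℂ} {c : ℝ} (hc : 0 < c)
    (hz : c * a ≤ ‖(a : ℂ) - z‖) : (a : ℂ) - z ≠ 0 := by
  intro h
  rw [h, norm_zero] at hz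
  nlinarith

private lemma add_one_ne_zero' (a : ℝ) (ha : 0 < a) : (a : ℂ) + 1 ≠ 0 := by
  intro h
  have : ((a : ℂ) + 1).re = a + 1 := by simp
  rw [h] at this
  simp at this
  linarith

private lemma integrand_norm_le {a : ℝ} (ha : 0 < a) {z : ℂ} {c : ℝ} (hc : 0 < c)
    (hz : c * a ≤ ‖(a : ℂ) - z‖) :
    ‖1 / ((a : ℂ) - z) - 1 / ((a : ℂ) + 1)‖ ≤ (‖1 + z‖ / c) * (a ^ 2)⁻¹ := by
  have haz := sub_ne_zero_of_bound ha hc hz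
  have ha1 := add_one_ne_zero' a ha
  have heq : 1 / ((a : ℂ) - z) - 1 / ((a : ℂ) + 1)
      = (1 + z) / (((a : ℂ) - z) * ((a : ℂ) + 1)) := by
    rw [div_sub_div _ _ haz ha1]
    congr 1
    ring
  have hn1 : ‖(a : ℂ) + 1‖ = a + 1 := by
    rw [show (a : ℂ) + 1 = ((a + 1 : ℝ) : ℂ) by push_cast; ring,
      Complex.norm_real, Real.norm_of_nonneg (by linarith)]
  rw [heq, norm_div, norm_mul, hn1]
  have hden : c * a * a ≤ ‖(a : ℂ) - z‖ * (a + 1) :=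
    mul_le_mul hz (by linarith) ha.le (norm_nonneg _)
  calc ‖1 + z‖ / (‖(a : ℂ) - z‖ * (a + 1)) ≤ ‖1 + z‖ / (c * a * a) := by
        apply div_le_div_of_nonneg_left (norm_nonneg _) (by positivity) hden
    _ = (‖1 + z‖ / c) * (a ^ 2)⁻¹ := by
        rw [sq, ← div_eq_mul_inv, div_div, mul_assoc]

private lemma deriv_norm_le {a : ℝ} (ha : 0 < a) {z : ℂ} {c : ℝ} (hc : 0 < c)
    (hz : c * a ≤ ‖(a : ℂ) - z‖) :
    ‖1 / ((a : ℂ) - z) ^ 2‖ ≤ c⁻¹ ^ 2 * (a ^ 2)⁻¹ := by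
  rw [norm_div, norm_one, norm_pow]
  have h1 : (c * a) ^ 2 ≤ ‖(a : ℂ) - z‖ ^ 2 := by
    apply pow_le_pow_left₀ (by positivity) hz
  calc 1 / ‖(a : ℂ) - z‖ ^ 2 ≤ 1 / (c * a) ^ 2 := by
        apply one_div_le_one_div_of_le (by positivity) h1
    _ = c⁻¹ ^ 2 * (a ^ 2)⁻¹ := by
        field_simp
  
private lemma hasDeriv_aux {a : ℝ} {z : ℂ} (h : (a : ℂ) - z ≠ 0) (b : ℂ) :
    HasDerivAt (fun w => b * (1 / ((a : ℂ) - w) - 1 / ((a : ℂ) + 1)))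
      (b * (1 / ((a : ℂ) - z) ^ 2)) z := by
  have h1 : HasDerivAt (fun w : ℂ => (a : ℂ) - w) (-1) z := by
    simpa using (hasDerivAt_id z).const_sub (a : ℂ)
  have h2 := h1.inv h
  have h3 := (h2.sub_const (1 / ((a : ℂ) + 1))).const_mul b
  have hfn : (fun w => b * (((a : ℂ) - w)⁻¹ - 1 / ((a : ℂ) + 1)))
      = fun w => b * (1 / ((a : ℂ) - w) - 1 / ((a : ℂ) + 1)) := by
    funext w; simp only [one_div]
  have hval : b * (-(-1) / ((a : ℂ) - z) ^ 2) = b * (1 / ((a : ℂ) - z) ^ 2) := by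
    ring
  rw [hval] at h3
  refine h3.congr_of_eventuallyEq (Filter.Eventually.of_forall fun w => ?_)
  simp only [Pi.inv_apply, one_div]

/-- For `f ∈ H_{−2}`, on the open set `ℂ \ [m,∞)`
(`= {z | Im z ≠ 0 ∨ Re z < m}`) the integrand
`k ↦ |f(k)|²(1/(ω(k)−z) − 1/(ω(k)+1))` is integrable and
`F(z) := ∫ |f|²(1/(ω−z) − 1/(ω+1)) dμ` is holomorphic. -/
theorem renormalized_selfEnergy_holomorphic
    {X : Type*} [MeasurableSpace X] (μ : Measure X)
    (ω : X → ℝ) (hω : Measurable ω) (m : ℝ) (hm : 0 < m) (hωm : ∀ k, m ≤ ω k)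
    (f : X → ℂ) (hf : Measurable f)
    (hf2 : (∫⁻ k, ENNReal.ofReal (ω k ^ (-2 : ℝ) * ‖f k‖ ^ 2) ∂μ) ≠ ⊤) :
    (∀ z ∈ {z : ℂ | z.im ≠ 0 ∨ z.re < m},
      Integrable
        (fun k => (‖f k‖ ^ 2 : ℂ) * (1 / ((ω k : ℂ) - z) - 1 / ((ω k : ℂ) + 1))) μ) ∧
    DifferentiableOn ℂ
      (fun z : ℂ =>
        ∫ k, (‖f k‖ ^ 2 : ℂ) * (1 / ((ω k : ℂ) - z) - 1 / ((ω k : ℂ) + 1)) ∂μ)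
      {z : ℂ | z.im ≠ 0 ∨ z.re < m} := by
  have hωpos : ∀ k, 0 < ω k := fun k => lt_of_lt_of_le hm (hωm k)
  have hrpow : ∀ k, ω k ^ (-2 : ℝ) = ((ω k) ^ 2)⁻¹ := by
    intro k
    rw [Real.rpow_neg (hωpos k).le, Real.rpow_two]
  -- the base integrable function
  have hbase : Integrable (fun k => ((ω k) ^ 2)⁻¹ * ‖f k‖ ^ 2) μ := by
    have hmeas : Measurable (fun k => ((ω k) ^ 2)⁻¹ * ‖f k‖ ^ 2) :=
      ((hω.pow_const 2).inv).mul (hf.norm.pow_const 2)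
    refine ⟨hmeas.aestronglyMeasurable, ?_⟩
    rw [hasFiniteIntegral_iff_ofReal (Filter.Eventually.of_forall fun k => by positivity)]
    have : (∫⁻ k, ENNReal.ofReal (((ω k) ^ 2)⁻¹ * ‖f k‖ ^ 2) ∂μ)
        = ∫⁻ k, ENNReal.ofReal (ω k ^ (-2 : ℝ) * ‖f k‖ ^ 2) ∂μ := by
      congr 1
      funext k
      rw [hrpow k]
    rw [this]
    exact hf2.lt_top
  have hnormsq : ∀ k, ‖(‖f k‖ ^ 2 : ℂ)‖ = ‖f k‖ ^ 2 := by
    intro k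
    simp [Complex.norm_real]
  have hmeasz : ∀ z : ℂ, AEStronglyMeasurable
      (fun k => (‖f k‖ ^ 2 : ℂ) * (1 / ((ω k : ℂ) - z) - 1 / ((ω k : ℂ) + 1))) μ := by
    intro z
    apply Measurable.aestronglyMeasurable
    have h1 : Measurable fun k => ((ω k : ℝ) : ℂ) := Complex.measurable_ofReal.comp hω
    have h2 : Measurable fun k => ((‖f k‖ : ℝ) : ℂ) := Complex.measurable_ofReal.comp hf.norm
    exact (h2.pow_const 2).mul
      ((measurable_const.div (h1.sub measurable_const)).sub
        (measurable_const.div (h1.add measurable_const)))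
  have hint : ∀ z ∈ {z : ℂ | z.im ≠ 0 ∨ z.re < m},
      Integrable
        (fun k => (‖f k‖ ^ 2 : ℂ) * (1 / ((ω k : ℂ) - z) - 1 / ((ω k : ℂ) + 1))) μ := by
    intro z hz
    obtain ⟨ε, hε, c, hc, hbd⟩ := distBound m hm hz
    have hbdz : ∀ x : ℝ, m ≤ x → c * x ≤ ‖(x : ℂ) - z‖ :=
      fun x hx => hbd z (mem_ball_self hε) x hx
    apply Integrable.mono' (hbase.const_mul (‖1 + z‖ / c)) (hmeasz z)
    filter_upwards with k
    rw [norm_mul, hnormsq k]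
    calc ‖f k‖ ^ 2 * ‖1 / ((ω k : ℂ) - z) - 1 / ((ω k : ℂ) + 1)‖
        ≤ ‖f k‖ ^ 2 * ((‖1 + z‖ / c) * ((ω k) ^ 2)⁻¹) := by
          apply mul_le_mul_of_nonneg_left
            (integrand_norm_le (hωpos k) hc (hbdz (ω k) (hωm k))) (by positivity)
      _ = ‖1 + z‖ / c * (((ω k) ^ 2)⁻¹ * ‖f k‖ ^ 2) := by ring
  refine ⟨hint, ?_⟩
  intro z₀ hz₀
  obtain ⟨ε, hε, c, hc, hbd⟩ := distBound m hm hz₀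
  have key := hasDerivAt_integral_of_dominated_loc_of_deriv_le (μ := μ)
    (F := fun z k => (‖f k‖ ^ 2 : ℂ) * (1 / ((ω k : ℂ) - z) - 1 / ((ω k : ℂ) + 1)))
    (F' := fun z k => (‖f k‖ ^ 2 : ℂ) * (1 / ((ω k : ℂ) - z) ^ 2))
    (bound := fun k => c⁻¹ ^ 2 * (((ω k) ^ 2)⁻¹ * ‖f k‖ ^ 2))
    (ball_mem_nhds z₀ hε)
    (Filter.Eventually.of_forall fun z => hmeasz z)
    (hint z₀ hz₀)
    (by
      apply Measurable.aestronglyMeasurable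
      have h1 : Measurable fun k => ((ω k : ℝ) : ℂ) := Complex.measurable_ofReal.comp hω
      have h2 : Measurable fun k => ((‖f k‖ : ℝ) : ℂ) := Complex.measurable_ofReal.comp hf.norm
      exact (h2.pow_const 2).mul
        (measurable_const.div ((h1.sub measurable_const).pow_const 2)))
    (by
      filter_upwards with k z hzball
      rw [norm_mul, hnormsq k]
      calc ‖f k‖ ^ 2 * ‖1 / ((ω k : ℂ) - z) ^ 2‖
          ≤ ‖f k‖ ^ 2 * (c⁻¹ ^ 2 * ((ω k) ^ 2)⁻¹) := by
            apply mul_le_mul_of_nonneg_left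
              (deriv_norm_le (hωpos k) hc (hbd z hzball (ω k) (hωm k))) (by positivity)
        _ = c⁻¹ ^ 2 * (((ω k) ^ 2)⁻¹ * ‖f k‖ ^ 2) := by ring)
    (hbase.const_mul _)
    (by
      filter_upwards with k z hzball
      exact hasDeriv_aux
        (sub_ne_zero_of_bound (hωpos k) hc (hbd z hzball (ω k) (hωm k))) _)
  exact key.2.differentiableAt.differentiableWithinAt
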